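/- Let φ satisfy Assumption (C¹ ∩ C²((0,∞)), φ'(t) ∼ t·φ''(t)), let a ≥ 0, and let φ_a be the shifted N-function. Then the family {φ_a}_{a≥0} satisfies the Δ₂-condition uniformly in a ≥ 0: there exists c > 0, independent of a, such that φ_a(2t) ≤ c·φ_a(t) for all t ≥ 0. -/

import Mathlib

open MeasureTheory Real Filter

def IsNFunction (φ φ' : ℝ → ℝ) : Prop :=
  ConvexOn ℝ (Set.Ici 0) φ ∧
  φ 0 = 0 ∧ φ' 0 = 0 ∧
  (∀ t : ℝ, 0 ≤ t → φ t = ∫ s in (0:ℝ)..t, φ' s) ∧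
  (∀ t : ℝ, 0 ≤ t → ContinuousWithinAt φ' (Set.Ici t) t) ∧
  MonotoneOn φ' (Set.Ici 0) ∧
  (∀ t : ℝ, 0 < t → 0 < φ' t) ∧
  Tendsto φ' atTop atTop


/-- The Assumption: `φ` is an N-function of class `C¹([0,∞)) ∩ C²((0,∞))`,
with derivative `φ'` and second derivative `φ''`. -/
def SatisfiesAssumption (φ φ' φ'' : ℝ → ℝ) : Prop :=
  IsNFunction φ φ' ∧
  (∀ t : ℝ, 0 ≤ t → HasDerivWithinAt φ (φ' t) (Set.Ici 0) t) ∧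
  ContinuousOn φ' (Set.Ici 0) ∧
  (∀ t : ℝ, 0 < t → HasDerivAt φ' (φ'' t) t) ∧
  ContinuousOn φ'' (Set.Ioi 0)

/-- The shifted N-function `φ_a(t) = ∫₀ᵗ φ'(a+s)·s/(a+s) ds`. -/
noncomputable def shiftedPhi (φ' : ℝ → ℝ) (a t : ℝ) : ℝ :=
  ∫ s in (0:ℝ)..t, φ' (a + s) * s / (a + s)
/-- Under the Assumption, the shifted N-functions `φ_a` satisfy the Δ₂-condition
uniformly in `a ≥ 0`. -/
theorem shifted_delta2_uniform (φ φ' φ'' : ℝ → ℝ) (hA : SatisfiesAssumption φ φ' φ'')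
    (d d' : ℝ) (hd : 0 < d) (hd' : 0 < d')
    (hequiv : ∀ t : ℝ, 0 < t → d * (t * φ'' t) ≤ φ' t ∧ φ' t ≤ d' * (t * φ'' t)) :
    ∃ c : ℝ, 0 < c ∧
      ∀ a t : ℝ, 0 ≤ a → 0 ≤ t →
        shiftedPhi φ' a (2 * t) ≤ c * shiftedPhi φ' a t := by
  obtain ⟨hN, hderiv, hcont, hderiv2, hcont2⟩ := hA
  obtain ⟨hconv, hφ0, hφ'0, hintr, _, hmono, hpos, _⟩ := hN
  have hφ'nonneg : ∀ u : ℝ, 0 ≤ u → 0 ≤ φ' u := by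
    intro u hu
    rcases hu.eq_or_lt with h | h
    · simp [← h, hφ'0]
    · exact (hpos u h).le
  set p : ℝ := -(1 / d) with hp
  have hCpos : (0:ℝ) < (2:ℝ) ^ (1 / d) := Real.rpow_pos_of_pos (by norm_num) _
  -- doubling of φ'
  have hdouble : ∀ u : ℝ, 0 ≤ u → φ' (2 * u) ≤ (2:ℝ) ^ (1 / d) * φ' u := by
    intro u hu
    rcases hu.eq_or_lt with h | h
    · simp [← h, hφ'0]
    · have hderivg : ∀ x ∈ Set.Ioi (0:ℝ), HasDerivAt (fun x => φ' x * x ^ p)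
          (φ'' x * x ^ p + φ' x * (p * x ^ (p - 1))) x := by
        intro x hx
        exact (hderiv2 x hx).mul (Real.hasDerivAt_rpow_const (Or.inl (ne_of_gt hx)))
      have hanti : AntitoneOn (fun x => φ' x * x ^ p) (Set.Ioi (0:ℝ)) := by
        apply antitoneOn_of_deriv_nonpos (convex_Ioi 0)
        · exact (hcont.mono Set.Ioi_subset_Ici_self).mul
            (continuousOn_id.rpow_const (fun x hx => Or.inl (ne_of_gt hx)))
        · rw [interior_Ioi]
          exact fun x hx => (hderivg x hx).differentiableAt.differentiableWithinAt
        · rw [interior_Ioi]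
          intro x hx
          rw [(hderivg x hx).deriv]
          have hx0 : (0:ℝ) < x := hx
          have h1 := (hequiv x hx0).1
          have hxp : (0:ℝ) < x ^ p := Real.rpow_pos_of_pos hx0 _
          have hxp1 : x ^ (p - 1) = x ^ p / x := by
            rw [Real.rpow_sub hx0, Real.rpow_one]
          have hE : φ'' x * x ^ p + φ' x * (p * x ^ (p - 1))
              = ((d * (x * φ'' x) - φ' x) * x ^ p) / (d * x) := by
            rw [hxp1, hp]
            field_simp
            ring
          rw [hE]
          exact div_nonpos_of_nonpos_of_nonneg
            (mul_nonpos_of_nonpos_of_nonneg (by linarith) hxp.le)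
            (by positivity)
      have key := hanti (Set.mem_Ioi.mpr h) (Set.mem_Ioi.mpr (by linarith : (0:ℝ) < 2 * u))
        (by linarith)
      simp only at key
      have hup : (0:ℝ) < u ^ p := Real.rpow_pos_of_pos h _
      have hmul : (2 * u : ℝ) ^ p = 2 ^ p * u ^ p :=
        Real.mul_rpow (by norm_num) h.le
      rw [hmul] at key
      have h2p : (2:ℝ) ^ p = ((2:ℝ) ^ (1 / d))⁻¹ := by
        rw [hp, Real.rpow_neg (by norm_num)]
      -- key : φ' (2u) * (2^p * u^p) ≤ φ' u * u^p
      have key2 : φ' (2 * u) * 2 ^ p ≤ φ' u := by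
        have := mul_le_mul_of_nonneg_right (le_refl (φ' u)) hup.le
        nlinarith [key, hup]
      rw [h2p, mul_inv_le_iff₀ hCpos] at key2
      linarith [key2]
  -- pointwise comparison for the shifted integrand
  have hpt : ∀ a s : ℝ, 0 ≤ a → 0 ≤ s →
      φ' (a + 2 * s) * (2 * s) / (a + 2 * s) ≤
        2 * (2:ℝ) ^ (1 / d) * (φ' (a + s) * s / (a + s)) := by
    intro a s ha hs
    rcases hs.eq_or_lt with h | h
    · simp [← h]
    · have has : 0 < a + s := by linarith
      have has2 : 0 < a + 2 * s := by linarith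
      have h1 : φ' (a + 2 * s) ≤ φ' (2 * (a + s)) :=
        hmono (by positivity : (0:ℝ) ≤ a + 2 * s) (by positivity : (0:ℝ) ≤ 2 * (a + s))
          (by linarith)
      have h2 : φ' (2 * (a + s)) ≤ (2:ℝ) ^ (1 / d) * φ' (a + s) := hdouble _ has.le
      have h3 : φ' (a + 2 * s) * (2 * s) / (a + 2 * s)
          ≤ ((2:ℝ) ^ (1 / d) * φ' (a + s)) * (2 * s) / (a + s) := by
        apply div_le_div₀ (mul_nonneg (mul_nonneg hCpos.le (hφ'nonneg _ has.le)) (by linarith))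
        · have := hφ'nonneg (a + s) has.le
          nlinarith
        · exact has
        · linarith
      calc φ' (a + 2 * s) * (2 * s) / (a + 2 * s)
          ≤ ((2:ℝ) ^ (1 / d) * φ' (a + s)) * (2 * s) / (a + s) := h3
        _ = 2 * (2:ℝ) ^ (1 / d) * (φ' (a + s) * s / (a + s)) := by ring
  refine ⟨4 * (2:ℝ) ^ (1 / d), by positivity, ?_⟩
  intro a t ha ht
  have hψcont : ContinuousOn (fun s => φ' (a + s) * s / (a + s)) (Set.Ici 0) := by
    rcases ha.eq_or_lt with h | h
    · apply (hcont.congr)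
      intro s hs
      rcases (Set.mem_Ici.mp hs).eq_or_lt with h' | h'
      · simp [← h, ← h', hφ'0]
      · rw [← h]
        field_simp
        rw [zero_add]
    · have hcomp : ContinuousOn (fun s : ℝ => φ' (a + s)) (Set.Ici 0) := by
        apply hcont.comp (continuous_const.add continuous_id).continuousOn
        intro s hs
        simp only [Set.mem_Ici, id_eq, Pi.add_apply] at *
        linarith
      apply (hcomp.mul continuousOn_id).div (continuous_const.add continuous_id).continuousOn
      intro s hs
      simp only [Set.mem_Ici, id_eq, Pi.add_apply] at hs ⊢
      positivity
  have hsub : Set.uIcc (0:ℝ) t ⊆ Set.Ici 0 := by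
    rw [Set.uIcc_of_le ht]; exact Set.Icc_subset_Ici_self
  have hint1 : IntervalIntegrable (fun s => φ' (a + s) * s / (a + s)) volume 0 t :=
    (hψcont.mono hsub).intervalIntegrable
  have hψ2cont : ContinuousOn (fun s => φ' (a + 2 * s) * (2 * s) / (a + 2 * s)) (Set.Ici 0) := by
    have : ContinuousOn ((fun s => φ' (a + s) * s / (a + s)) ∘ (fun s : ℝ => 2 * s))
        (Set.Ici 0) := by
      apply hψcont.comp (continuous_const.mul continuous_id).continuousOn
      intro s hs
      simp only [Set.mem_Ici, id_eq, Pi.mul_apply] at *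
      linarith
    exact this
  have hint2 : IntervalIntegrable (fun s => φ' (a + 2 * s) * (2 * s) / (a + 2 * s)) volume 0 t :=
    (hψ2cont.mono hsub).intervalIntegrable
  have heq : shiftedPhi φ' a (2 * t) =
      2 * ∫ s in (0:ℝ)..t, φ' (a + 2 * s) * (2 * s) / (a + 2 * s) := by
    rw [shiftedPhi]
    have := intervalIntegral.smul_integral_comp_mul_left
      (fun s => φ' (a + s) * s / (a + s)) (2:ℝ) (a := 0) (b := t)
    simp only [mul_zero, smul_eq_mul] at this
    rw [← this]
  rw [heq, shiftedPhi]
  have hmono' : (∫ s in (0:ℝ)..t, φ' (a + 2 * s) * (2 * s) / (a + 2 * s))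
      ≤ ∫ s in (0:ℝ)..t, 2 * (2:ℝ) ^ (1 / d) * (φ' (a + s) * s / (a + s)) := by
    apply intervalIntegral.integral_mono_on ht hint2 (hint1.const_mul _)
    intro s hs
    exact hpt a s ha hs.1
  rw [intervalIntegral.integral_const_mul] at hmono'
  linarith
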